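/- For fixed k, define b^{(k)} by b_n^{(k)} = 0 for n < k, b_k^{(k)} = (λ_k/(λ_k − λ_{k-1})) · f_{k+1}²/(f_k f_{k+1}), and b_n^{(k)} = (λ_k/(λ_k − λ_{k-1})) · f_{n+1}²/(f_k f_{k+1}) − (λ_k/(λ_{k+1} − λ_k)) · f_{n+1}²/(f_{k+1} f_{k+2}) for n > k. Then F̄(b^{(k)}) = e^{(k)}, the sequence with 1 in position k and 0 elsewhere. -/

import Mathlib

open Filter Finset

noncomputable def fibR : ℕ → ℝ
  | 0 => 1
  | 1 => 1
  | (n + 2) => fibR (n + 1) + fibR n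

noncomputable def Fhat (x : ℕ → ℝ) (n : ℕ) : ℝ :=
  fibR n / fibR (n + 1) * x n - fibR (n + 1) / fibR n * (if n = 0 then 0 else x (n - 1))

noncomputable def Fbar (Λ : ℕ → ℝ) (x : ℕ → ℝ) (n : ℕ) : ℝ :=
  (1 / Λ n) * ∑ k ∈ Finset.range (n + 1),
    (Λ k - if k = 0 then 0 else Λ (k - 1)) *
      (fibR k / fibR (k + 1) * x k -
        fibR (k + 1) / fibR k * (if k = 0 then 0 else x (k - 1)))

noncomputable def bseq (Λ : ℕ → ℝ) (k n : ℕ) : ℝ :=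
  if n < k then 0
  else if n = k then
    (Λ k / (Λ k - if k = 0 then 0 else Λ (k - 1))) * (fibR (k + 1) ^ 2 / (fibR k * fibR (k + 1)))
  else
    (Λ k / (Λ k - if k = 0 then 0 else Λ (k - 1))) * (fibR (n + 1) ^ 2 / (fibR k * fibR (k + 1)))
      - (Λ k / (Λ (k + 1) - Λ k)) * (fibR (n + 1) ^ 2 / (fibR (k + 1) * fibR (k + 2)))

lemma fibR_pos : ∀ n, 0 < fibR n
  | 0 => by rw [fibR]; norm_num
  | 1 => by rw [fibR]; norm_num
  | (n + 2) => by rw [fibR]; exact add_pos (fibR_pos (n + 1)) (fibR_pos n)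

lemma fibR_ne (n : ℕ) : fibR n ≠ 0 := (fibR_pos n).ne'

lemma key1 (L D a b : ℝ) (hD : D ≠ 0) (ha : a ≠ 0) (hb : b ≠ 0) :
    D * (a / b * (L / D * (b ^ 2 / (a * b))) - b / a * 0) = L + 0 := by
  field_simp
  ring

lemma key2 (L D D' a b c : ℝ) (hD : D ≠ 0) (hD' : D' ≠ 0)
    (ha : a ≠ 0) (hb : b ≠ 0) (hc : c ≠ 0) :
    D' * (b / c * (L / D * (c ^ 2 / (a * b)) - L / D' * (c ^ 2 / (b * c))) -
      c / b * (L / D * (b ^ 2 / (a * b)))) = 0 + -L := by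
  field_simp
  ring

lemma key3 (L D D' a b c u v W : ℝ) (hD : D ≠ 0) (hD' : D' ≠ 0)
    (ha : a ≠ 0) (hb : b ≠ 0) (hc : c ≠ 0) (hu : u ≠ 0) (hv : v ≠ 0) :
    W * (u / v * (L / D * (v ^ 2 / (a * b)) - L / D' * (v ^ 2 / (b * c))) -
      v / u * (L / D * (u ^ 2 / (a * b)) - L / D' * (u ^ 2 / (b * c)))) = 0 + 0 := by
  have : u / v * (L / D * (v ^ 2 / (a * b)) - L / D' * (v ^ 2 / (b * c))) -
      v / u * (L / D * (u ^ 2 / (a * b)) - L / D' * (u ^ 2 / (b * c))) = 0 := by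
    field_simp
    ring
  rw [this, mul_zero]; norm_num

theorem fbar_bseq (Λ : ℕ → ℝ) (hmono : StrictMono Λ) (hpos : ∀ k, 0 < Λ k)
    (hlim : Tendsto Λ atTop atTop) (k n : ℕ) :
    Fbar Λ (bseq Λ k) n = if n = k then 1 else 0 := by
  have hΔ : (0:ℝ) < Λ k - if k = 0 then 0 else Λ (k - 1) := by
    rcases Nat.eq_zero_or_pos k with hk | hk
    · subst hk; simpa using hpos 0
    · rw [if_neg hk.ne']
      exact sub_pos.2 (hmono (Nat.sub_lt hk one_pos))
  have hΔ' : (0:ℝ) < Λ (k + 1) - Λ k := sub_pos.2 (hmono (Nat.lt_succ_self k))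
  have hterm : ∀ j, (Λ j - if j = 0 then 0 else Λ (j - 1)) *
      (fibR j / fibR (j + 1) * bseq Λ k j -
        fibR (j + 1) / fibR j * (if j = 0 then 0 else bseq Λ k (j - 1))) =
      (if j = k then Λ k else 0) + (if j = k + 1 then -Λ k else 0) := by
    intro j
    rcases lt_trichotomy j k with hj | hj | hj
    · -- j < k : everything vanishes
      have h1 : bseq Λ k j = 0 := if_pos hj
      rw [if_neg hj.ne, if_neg (by omega : j ≠ k + 1), h1]
      rcases Nat.eq_zero_or_pos j with h0 | h0
      · simp [h0]
      · have h2 : bseq Λ k (j - 1) = 0 := if_pos (lt_of_le_of_lt (Nat.sub_le j 1) hj)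
        rw [h2, if_neg h0.ne', if_neg h0.ne']; ring
    · -- j = k
      subst hj
      have hb : bseq Λ j j = (Λ j / (Λ j - if j = 0 then 0 else Λ (j - 1))) *
          (fibR (j + 1) ^ 2 / (fibR j * fibR (j + 1))) := by
        rw [bseq, if_neg (lt_irrefl j), if_pos rfl]
      have hprev : (if j = 0 then (0:ℝ) else bseq Λ j (j - 1)) = 0 := by
        rcases Nat.eq_zero_or_pos j with h0 | h0
        · simp [h0]
        · rw [if_neg h0.ne']; exact if_pos (Nat.sub_lt h0 one_pos)
      rw [hprev, hb, if_pos rfl, if_neg (by omega : j ≠ j + 1)]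
      exact key1 (Λ j) _ _ _ hΔ.ne' (fibR_ne j) (fibR_ne (j + 1))
    · -- j > k
      have hbj' : ∀ m, k < m → bseq Λ k m =
          (Λ k / (Λ k - if k = 0 then 0 else Λ (k - 1))) *
              (fibR (m + 1) ^ 2 / (fibR k * fibR (k + 1)))
            - (Λ k / (Λ (k + 1) - Λ k)) * (fibR (m + 1) ^ 2 / (fibR (k + 1) * fibR (k + 2))) := by
        intro m hm
        rw [bseq, if_neg (by omega : ¬ m < k), if_neg (by omega : m ≠ k)]
      obtain ⟨m, rfl⟩ := Nat.exists_eq_add_of_le (Nat.succ_le_of_lt hj)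
      rcases Nat.eq_zero_or_pos m with hm | hm
      · -- j = k + 1
        subst hm
        have hw : k + 1 + 0 = k + 1 := rfl
        rw [hw]
        have hprev : bseq Λ k (k + 1 - 1) =
            (Λ k / (Λ k - if k = 0 then 0 else Λ (k - 1))) *
              (fibR (k + 1) ^ 2 / (fibR k * fibR (k + 1))) := by
          rw [Nat.add_sub_cancel, bseq, if_neg (lt_irrefl k), if_pos rfl]
        rw [if_neg (Nat.succ_ne_zero k), if_neg (by omega : k + 1 ≠ k), if_pos rfl,
          hbj' (k + 1) (Nat.lt_succ_self k), hprev, Nat.add_sub_cancel]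
        exact key2 (Λ k) _ _ _ _ _ hΔ.ne' hΔ'.ne' (fibR_ne k) (fibR_ne (k + 1)) (fibR_ne (k + 2))
      · -- j ≥ k + 2
        set j := k + 1 + m with hjdef
        have hj0 : j ≠ 0 := by omega
        have hjne : j ≠ k := by omega
        have hjne' : j ≠ k + 1 := by omega
        have hs : j - 1 + 1 = j := by omega
        simp only [if_neg hj0, if_neg hjne, if_neg hjne']
        rw [hbj' j (by omega), hbj' (j - 1) (by omega), hs]
        exact key3 (Λ k) _ _ _ _ _ _ _ _ hΔ.ne' hΔ'.ne' (fibR_ne k) (fibR_ne (k + 1))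
          (fibR_ne (k + 2)) (fibR_ne j) (fibR_ne (j + 1))
  rw [Fbar]
  rw [Finset.sum_congr rfl (fun j _ => hterm j), Finset.sum_add_distrib,
    Finset.sum_ite_eq' _ k (fun _ => Λ k), Finset.sum_ite_eq' _ (k + 1) (fun _ => -Λ k)]
  simp only [Finset.mem_range]
  rcases lt_trichotomy n k with h | h | h
  · rw [if_neg (by omega), if_neg (by omega), if_neg (by omega)]; ring
  · subst h
    rw [if_pos (by omega), if_neg (by omega), if_pos rfl]
    rw [add_zero, one_div, inv_mul_cancel₀ (hpos n).ne']
  · rw [if_pos (by omega), if_pos (by omega), if_neg (by omega)]; ring
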